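/- For integers 0 ≤ h ≤ d, the set of sums of h pairwise distinct elements of B = {1, 2, ..., d} ⊆ ℤ equals the integer interval [h(h+1)/2, d(d+1)/2 - (d-h)(d-h+1)/2], and hence has cardinality h(d-h) + 1. -/
import Mathlib

private def T (n : ℤ) : ℤ := n * (n + 1) / 2

private lemma two_T (n : ℤ) : 2 * T n = n * (n + 1) :=
  Int.mul_ediv_cancel' ((Int.even_mul_succ_self n).two_dvd)

private lemma T_succ (n : ℤ) : T (n + 1) = T n + (n + 1) := by
  have h1 := two_T n
  have h2 := two_T (n + 1)
  nlinarith

private lemma T_zero : T 0 = 0 := by decide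

private lemma Icc_union_Icc (a b c e : ℤ) (h1 : a ≤ c) (h2 : c ≤ b + 1) (h3 : b ≤ e) :
    Finset.Icc a b ∪ Finset.Icc c e = Finset.Icc a e := by
  ext x
  simp only [Finset.mem_union, Finset.mem_Icc]
  omega

private lemma key : ∀ d h : ℕ, h ≤ d →
    (((Finset.Icc (1 : ℤ) d).powersetCard h).image fun S => S.sum id) =
      Finset.Icc (T h) (T d - T ((d : ℤ) - h)) := by
  intro d
  induction d with
  | zero =>
    intro h hh
    interval_cases h
    simp [T_zero]
  | succ d IH =>
    intro h hh
    match h with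
    | 0 =>
      simp [Finset.powersetCard_zero, T_zero]
    | Nat.succ k =>
      have hk : k ≤ d := Nat.succ_le_succ_iff.mp hh
      have hd1 : ((d : ℤ) + 1) ∉ Finset.Icc (1 : ℤ) d := by
        simp [Finset.mem_Icc]
      have hIcc : Finset.Icc (1 : ℤ) ((d : ℕ) + 1 : ℕ) =
          insert ((d : ℤ) + 1) (Finset.Icc (1 : ℤ) d) := by
        ext x
        simp only [Finset.mem_insert, Finset.mem_Icc]
        push_cast
        omega
      rw [hIcc, Finset.powersetCard_succ_insert hd1, Finset.image_union]
      -- second part: image of insert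
      have hins : (((Finset.Icc (1 : ℤ) d).powersetCard k).image
            (insert ((d : ℤ) + 1))).image (fun S => S.sum id) =
          ((Finset.Icc (1 : ℤ) d).powersetCard k).image
            (fun S => ((d : ℤ) + 1) + S.sum id) := by
        rw [Finset.image_image]
        refine Finset.image_congr ?_
        intro S hS
        simp only [Finset.mem_coe, Finset.mem_powersetCard] at hS
        have : ((d : ℤ) + 1) ∉ S := fun hx => hd1 (hS.1 hx)
        simp [Function.comp, Finset.sum_insert this]
      rw [hins]
      have himg2 : ((Finset.Icc (1 : ℤ) d).powersetCard k).image
            (fun S => ((d : ℤ) + 1) + S.sum id) =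
          (((Finset.Icc (1 : ℤ) d).powersetCard k).image (fun S => S.sum id)).image
            (fun x => ((d : ℤ) + 1) + x) := by
        rw [Finset.image_image]
        rfl
      rw [himg2, IH k hk, Finset.image_add_left_Icc]
      rcases Nat.lt_or_ge k d with hkd | hkd
      · -- k + 1 ≤ d
        have hk1 : k + 1 ≤ d := hkd
        rw [IH (k + 1) hk1]
        have e1 : T ((k : ℤ) + 1) = T k + (k + 1) := T_succ k
        have e2 : T ((d : ℤ) + 1) = T d + (d + 1) := T_succ d
        have hkd' : ((k : ℤ) + 1) ≤ d := by exact_mod_cast hk1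
        have e3 : T ((d : ℤ) - k) = T ((d : ℤ) - k - 1) + ((d : ℤ) - k) := by
          have h5 := T_succ ((d : ℤ) - k - 1)
          have h4 : (d : ℤ) - k - 1 + 1 = (d : ℤ) - k := by ring
          rw [h4] at h5
          linarith
        have hTk := two_T (k : ℤ)
        have hTd := two_T (d : ℤ)
        have hTdk1 := two_T ((d : ℤ) - k - 1)
        have h2 : T k + ((d : ℤ) + 1) ≤ (T d - T ((d : ℤ) - (k + 1))) + 1 := by
          have hc : ((d : ℤ) - (k + 1)) = (d : ℤ) - k - 1 := by ring
          rw [hc]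
          nlinarith [hTk, hTd, hTdk1,
            mul_nonneg (by positivity : (0:ℤ) ≤ (k : ℤ)) (by linarith : (0:ℤ) ≤ (d:ℤ) - ((k:ℤ)+1))]
        have goal := Icc_union_Icc (T ((k : ℤ) + 1)) (T d - T ((d : ℤ) - (k + 1)))
          (((d : ℤ) + 1) + T k) (((d : ℤ) + 1) + (T d - T ((d : ℤ) - k)))
          (by linarith [e1])
          (by linarith [h2])
          (by
            have hc : ((d : ℤ) - (k + 1)) = (d : ℤ) - k - 1 := by ring
            rw [hc]
            linarith [e3])
        push_cast
        rw [goal]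
        have hc2 : ((d : ℤ) + 1 - ((k : ℤ) + 1)) = (d : ℤ) - k := by ring
        rw [hc2, e2]
        congr 1
        ring
      · -- k = d : first powersetCard is empty
        have hke : k = d := le_antisymm hk hkd
        subst hke
        have hcard : (Finset.Icc (1 : ℤ) k).card = k := by
          rw [Int.card_Icc]; omega
        have hemp : (Finset.Icc (1 : ℤ) k).powersetCard (k + 1) = ∅ := by
          rw [Finset.powersetCard_eq_empty]; omega
        rw [hemp]
        simp only [Finset.image_empty, Finset.empty_union]
        have : ((k : ℤ) - k) = 0 := by ring
        rw [this, T_zero]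
        have e2 : T ((k : ℤ) + 1) = T k + (k + 1) := T_succ k
        push_cast
        congr 1
        · linarith
        · have : ((k : ℤ) + 1 - (k + 1)) = 0 := by ring
          rw [this, T_zero, e2]; ring

theorem kfold_sum_of_interval (d h : ℕ) (hh : h ≤ d) :
    (((Finset.Icc (1 : ℤ) d).powersetCard h).image fun S => S.sum id) =
      Finset.Icc ((h * (h + 1) : ℤ) / 2)
        ((d * (d + 1) : ℤ) / 2 - ((d - h) * (d - h + 1) : ℤ) / 2) ∧
    (((Finset.Icc (1 : ℤ) d).powersetCard h).image fun S => S.sum id).card =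
      h * (d - h) + 1 := by
  have hkey := key d h hh
  have heq : (((Finset.Icc (1 : ℤ) d).powersetCard h).image fun S => S.sum id) =
      Finset.Icc ((h * (h + 1) : ℤ) / 2)
        ((d * (d + 1) : ℤ) / 2 - ((d - h) * (d - h + 1) : ℤ) / 2) := by
    rw [hkey]; rfl
  refine ⟨heq, ?_⟩
  rw [hkey, Int.card_Icc]
  have hTh := two_T (h : ℤ)
  have hTd := two_T (d : ℤ)
  have hTdh := two_T ((d : ℤ) - h)
  have hval : T (d : ℤ) - T ((d : ℤ) - h) + 1 - T (h : ℤ) = (h : ℤ) * ((d : ℤ) - h) + 1 := by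
    nlinarith
  rw [hval]
  have hcast : ((h * (d - h) + 1 : ℕ) : ℤ) = (h : ℤ) * ((d : ℤ) - h) + 1 := by
    push_cast [Nat.cast_sub hh]
    ring
  omega
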